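/- Let X and Y be complex Banach spaces and T : X → Y a compact linear operator. Then for every δ > 0 there exists an integer L = L(δ) such that for every continuous function f : 𝕋 → X with ‖f(e^{it})‖_X ≤ 1 for all t, the set {k ∈ ℤ : ‖T(f̂(k))‖_Y > δ} has at most L elements. -/

import Mathlib

open MeasureTheory Filter Topology

/-- The `k`-th Fourier coefficient of a `2π`-periodic function `f : ℝ → X`,
`f̂(k) = ∫₀^{2π} f(e^{it}) e^{-ikt} dt/2π`. -/
noncomputable def fourierCoefFn {X : Type*} [NormedAddCommGroup X] [NormedSpace ℂ X]
    (f : ℝ → X) (k : ℤ) : X :=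
  (((2 * Real.pi)⁻¹ : ℝ) : ℂ) •
    ∫ t in (0:ℝ)..(2 * Real.pi), Complex.exp (-(Complex.I * k * t)) • f t

lemma exp_int_integral (n : ℤ) :
    ∫ t in (0:ℝ)..(2 * Real.pi), Complex.exp (Complex.I * n * t)
      = if n = 0 then ((2 * Real.pi : ℝ) : ℂ) else 0 := by
  rcases eq_or_ne n 0 with h | h
  · simp [h]
  · have hc : (Complex.I * (n : ℂ)) ≠ 0 :=
      mul_ne_zero Complex.I_ne_zero (Int.cast_ne_zero.mpr h)
    rw [if_neg h]
    have := integral_exp_mul_complex (a := 0) (b := 2 * Real.pi) hc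
    simp_rw [mul_assoc] at this ⊢
    rw [this]
    have h1 : Complex.I * ((n : ℂ) * ((2 * Real.pi : ℝ) : ℂ)) = n * (2 * Real.pi * Complex.I) := by
      push_cast; ring
    rw [h1, Complex.exp_int_mul_two_pi_mul_I]
    simp

lemma kernel_l2 (A : Finset ℤ) :
    ∫ t in (0:ℝ)..(2 * Real.pi), ‖∑ k ∈ A, Complex.exp (-(Complex.I * k * t))‖ ^ 2
      = 2 * Real.pi * A.card := by
  set D : ℝ → ℂ := fun t => ∑ k ∈ A, Complex.exp (-(Complex.I * k * t)) with hD
  have hDc : Continuous D := by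
    apply continuous_finset_sum
    intro k _
    exact Complex.continuous_exp.comp (by continuity)
  have hconj : ∀ (k : ℤ) (t : ℝ),
      (starRingEnd ℂ) (Complex.exp (-(Complex.I * k * t))) = Complex.exp (Complex.I * k * t) := by
    intro k t
    rw [← Complex.exp_conj]
    congr 1
    simp [map_neg, map_mul, Complex.conj_I]
  have hexp : ∀ (j k : ℤ) (t : ℝ),
      Complex.exp (-(Complex.I * j * t)) * (starRingEnd ℂ) (Complex.exp (-(Complex.I * k * t)))
        = Complex.exp (Complex.I * ((k - j : ℤ) : ℂ) * t) := by
    intro j k t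
    rw [hconj, ← Complex.exp_add]
    congr 1
    push_cast
    ring
  have key : (∫ t in (0:ℝ)..(2 * Real.pi), D t * (starRingEnd ℂ) (D t))
      = ((2 * Real.pi * A.card : ℝ) : ℂ) := by
    have expand : ∀ t : ℝ, D t * (starRingEnd ℂ) (D t)
        = ∑ j ∈ A, ∑ k ∈ A, Complex.exp (Complex.I * ((k - j : ℤ) : ℂ) * t) := by
      intro t
      rw [hD]
      simp only [map_sum]
      rw [Finset.sum_mul_sum]
      exact Finset.sum_congr rfl fun j _ => Finset.sum_congr rfl fun k _ => hexp j k t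
    simp_rw [expand]
    rw [intervalIntegral.integral_finset_sum]
    · have inner : ∀ j ∈ A, (∫ t in (0:ℝ)..(2 * Real.pi),
          ∑ k ∈ A, Complex.exp (Complex.I * ((k - j : ℤ) : ℂ) * t)) = ((2 * Real.pi : ℝ) : ℂ) := by
        intro j hj
        rw [intervalIntegral.integral_finset_sum]
        · have : ∀ k ∈ A, (∫ t in (0:ℝ)..(2 * Real.pi),
              Complex.exp (Complex.I * ((k - j : ℤ) : ℂ) * t))
              = if k = j then ((2 * Real.pi : ℝ) : ℂ) else 0 := by
            intro k _
            rw [exp_int_integral (k - j)]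
            simp [sub_eq_zero]
          rw [Finset.sum_congr rfl this, Finset.sum_ite_eq' A j (fun _ => ((2 * Real.pi : ℝ) : ℂ))]
          simp [hj]
        · intro k _
          exact (Complex.continuous_exp.comp (by continuity)).intervalIntegrable _ _
      rw [Finset.sum_congr rfl inner, Finset.sum_const]
      push_cast
      ring
    · intro j _
      apply Continuous.intervalIntegrable
      apply continuous_finset_sum
      intro k _
      exact Complex.continuous_exp.comp (by continuity)
  have hre : ∀ t : ℝ, ((‖D t‖ ^ 2 : ℝ) : ℂ) = D t * (starRingEnd ℂ) (D t) := by
    intro t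
    rw [Complex.mul_conj, Complex.normSq_eq_norm_sq]
  have : ((∫ t in (0:ℝ)..(2 * Real.pi), ‖D t‖ ^ 2 : ℝ) : ℂ)
      = ((2 * Real.pi * A.card : ℝ) : ℂ) := by
    rw [← intervalIntegral.integral_ofReal]
    simp_rw [hre]
    exact key
  exact_mod_cast this

lemma sum_fourierCoef_norm_le {X : Type*} [NormedAddCommGroup X] [NormedSpace ℂ X]
    [CompleteSpace X] (f : ℝ → X) (hf : Continuous f) (hb : ∀ t, ‖f t‖ ≤ 1) (A : Finset ℤ) :
    ‖∑ k ∈ A, fourierCoefFn f k‖ ≤ Real.sqrt A.card := by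
  rcases A.eq_empty_or_nonempty with rfl | hA
  · simp
  set D : ℝ → ℂ := fun t => ∑ k ∈ A, Complex.exp (-(Complex.I * k * t)) with hD
  have hDc : Continuous D := by
    apply continuous_finset_sum
    intro k _
    exact Complex.continuous_exp.comp (by continuity)
  set m : ℝ := (A.card : ℝ) with hm
  have hm1 : (1 : ℝ) ≤ m := by
    have h : (1:ℕ) ≤ A.card := Finset.card_pos.mpr hA
    rw [hm]
    exact_mod_cast h
  set c : ℝ := Real.sqrt m with hc
  have hc0 : 0 < c := Real.sqrt_pos.mpr (by linarith)
  have hcsq : c ^ 2 = m := Real.sq_sqrt (by linarith)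
  have hpi : (0 : ℝ) < Real.pi := Real.pi_pos
  -- Step 1: rewrite the sum of coefficients as a single integral
  have step1 : ∑ k ∈ A, fourierCoefFn f k
      = (((2 * Real.pi)⁻¹ : ℝ) : ℂ) • ∫ t in (0:ℝ)..(2 * Real.pi), D t • f t := by
    unfold fourierCoefFn
    rw [← Finset.smul_sum]
    congr 1
    rw [← intervalIntegral.integral_finset_sum]
    · apply intervalIntegral.integral_congr
      intro t _
      rw [hD]
      simp [Finset.sum_smul]
    · intro k _
      apply Continuous.intervalIntegrable
      exact (Complex.continuous_exp.comp (by continuity)).smul hf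
  -- Step 2: norm estimate
  have hDint : IntervalIntegrable (fun t => ‖D t • f t‖) volume 0 (2 * Real.pi) :=
    ((hDc.smul hf).norm).intervalIntegrable _ _
  have hGint : IntervalIntegrable (fun t => ‖D t‖ ^ 2 / (2 * c) + c / 2) volume 0 (2 * Real.pi) :=
    (((hDc.norm.pow 2).div_const _).add continuous_const).intervalIntegrable _ _
  have pointwise : ∀ t ∈ Set.Icc (0:ℝ) (2 * Real.pi),
      ‖D t • f t‖ ≤ ‖D t‖ ^ 2 / (2 * c) + c / 2 := by
    intro t _
    have h1 : ‖D t • f t‖ ≤ ‖D t‖ := by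
      rw [norm_smul]
      calc ‖D t‖ * ‖f t‖ ≤ ‖D t‖ * 1 :=
            mul_le_mul_of_nonneg_left (hb t) (norm_nonneg _)
        _ = ‖D t‖ := mul_one _
    have h2 : ‖D t‖ - c / 2 ≤ ‖D t‖ ^ 2 / (2 * c) := by
      rw [le_div_iff₀ (by positivity : (0:ℝ) < 2 * c)]
      nlinarith [sq_nonneg (‖D t‖ - c)]
    linarith
  have step2 : ‖∫ t in (0:ℝ)..(2 * Real.pi), D t • f t‖
      ≤ ∫ t in (0:ℝ)..(2 * Real.pi), (‖D t‖ ^ 2 / (2 * c) + c / 2) := by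
    calc ‖∫ t in (0:ℝ)..(2 * Real.pi), D t • f t‖
        ≤ ∫ t in (0:ℝ)..(2 * Real.pi), ‖D t • f t‖ :=
          intervalIntegral.norm_integral_le_integral_norm (by positivity)
      _ ≤ _ := intervalIntegral.integral_mono_on (by positivity) hDint hGint pointwise
  -- Step 3: compute the majorant integral
  have step3 : (∫ t in (0:ℝ)..(2 * Real.pi), (‖D t‖ ^ 2 / (2 * c) + c / 2))
      = 2 * Real.pi * c := by
    rw [intervalIntegral.integral_add ((show Continuous (fun t => ‖D t‖ ^ 2 / (2 * c)) from (hDc.norm.pow 2).div_const _).intervalIntegrable _ _)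
        (intervalIntegrable_const)]
    rw [intervalIntegral.integral_div, intervalIntegral.integral_const, smul_eq_mul, sub_zero]
    rw [kernel_l2 A]
    field_simp
    nlinarith [hcsq, hc0, hpi, hm]
  rw [step1]
  rw [norm_smul]
  have hnc : ‖(((2 * Real.pi)⁻¹ : ℝ) : ℂ)‖ = (2 * Real.pi)⁻¹ := by
    rw [Complex.norm_real, Real.norm_eq_abs, abs_of_pos (by positivity)]
  rw [hnc]
  calc (2 * Real.pi)⁻¹ * ‖∫ t in (0:ℝ)..(2 * Real.pi), D t • f t‖
      ≤ (2 * Real.pi)⁻¹ * (2 * Real.pi * c) := by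
        apply mul_le_mul_of_nonneg_left _ (by positivity)
        exact step2.trans (le_of_eq step3)
    _ = c := by field_simp

theorem stmt3 {X Y : Type*} [NormedAddCommGroup X] [NormedSpace ℂ X] [CompleteSpace X]
    [NormedAddCommGroup Y] [NormedSpace ℂ Y] [CompleteSpace Y]
    (T : X →L[ℂ] Y) (hT : IsCompactOperator T) :
    ∀ δ > (0:ℝ), ∃ L : ℕ,
      ∀ f : ℝ → X, Continuous f → Function.Periodic f (2 * Real.pi) →
        (∀ t : ℝ, ‖f t‖ ≤ 1) →
        ∃ s : Finset ℤ, s.card ≤ L ∧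
          ∀ k : ℤ, δ < ‖T (fourierCoefFn f k)‖ → k ∈ s := by
  intro δ hδ
  -- compactness: finite δ/4-net for T(closed unit ball)
  have hT' : IsCompactOperator (T.toLinearMap : X →ₛₗ[RingHom.id ℂ] Y) := hT
  obtain ⟨K, hK, hKsub⟩ := hT'.image_closedBall_subset_compact 1
  obtain ⟨net, hnetfin, hnetsub⟩ :=
    (Metric.totallyBounded_iff.mp hK.totallyBounded) (δ/4) (by positivity)
  set C : Finset Y := hnetfin.toFinset with hC
  set x : ℝ := (2 * ‖T‖ / δ) ^ 2 with hx
  set m0 : ℕ := ⌈x⌉₊ with hm0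
  refine ⟨C.card * m0, ?_⟩
  intro f hf hper hb
  -- each coefficient is in the unit ball
  have hcoef : ∀ k : ℤ, ‖fourierCoefFn f k‖ ≤ 1 := by
    intro k
    have := sum_fourierCoef_norm_le f hf hb {k}
    simpa using this
  set S : Set ℤ := {k : ℤ | δ < ‖T (fourierCoefFn f k)‖} with hS
  -- claim: any finset inside S has card ≤ L
  have claim : ∀ F : Finset ℤ, ↑F ⊆ S → F.card ≤ C.card * m0 := by
    intro F hFS
    by_contra hcard
    push_neg at hcard
    -- choose a center for each k
    have hex : ∀ k ∈ F, ∃ y ∈ C, T (fourierCoefFn f k) ∈ Metric.ball y (δ/4) := by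
      intro k hk
      have h1 : T (fourierCoefFn f k) ∈ K := by
        apply hKsub
        exact ⟨fourierCoefFn f k, by simpa [Metric.mem_closedBall] using hcoef k, rfl⟩
      have h2 := hnetsub h1
      simp only [Set.mem_iUnion] at h2
      obtain ⟨y, hy, hmem⟩ := h2
      exact ⟨y, by simpa [hC] using hy, hmem⟩
    classical
    set g : ℤ → Y := fun k =>
      if h : ∃ y ∈ C, T (fourierCoefFn f k) ∈ Metric.ball y (δ/4) then h.choose else 0 with hg
    have hgmem : ∀ k ∈ F, g k ∈ C := by
      intro k hk
      rw [hg]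
      simp only [dif_pos (hex k hk)]
      exact (hex k hk).choose_spec.1
    have hgball : ∀ k ∈ F, T (fourierCoefFn f k) ∈ Metric.ball (g k) (δ/4) := by
      intro k hk
      rw [hg]
      simp only [dif_pos (hex k hk)]
      exact (hex k hk).choose_spec.2
    obtain ⟨y, hyC, hfib⟩ :=
      Finset.exists_lt_card_fiber_of_mul_lt_card_of_maps_to hgmem hcard
    set B : Finset ℤ := {x ∈ F | g x = y} with hB
    have hBF : B ⊆ F := Finset.filter_subset _ _
    set m : ℕ := B.card with hm
    have hm0m : m0 < m := hfib
    have hmR : x < (m : ℝ) := by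
      have h1 : x ≤ (m0 : ℝ) := Nat.le_ceil x
      have h2 : (m0 : ℝ) < m := by exact_mod_cast hm0m
      linarith
    have hm1 : 1 ≤ m := by
      rcases Nat.eq_zero_or_pos m with h | h
      · exfalso; rw [h] at hmR; have : (0:ℝ) ≤ x := by positivity
        simp at hmR; linarith
      · exact h
    have hBne : B.Nonempty := Finset.card_pos.mp (by omega)
    -- properties of elements of B
    have hBprop : ∀ k ∈ B, δ < ‖T (fourierCoefFn f k)‖ ∧
        ‖T (fourierCoefFn f k) - y‖ < δ/4 := by
      intro k hk
      have hkF : k ∈ F := hBF hk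
      have h1 : δ < ‖T (fourierCoefFn f k)‖ := hFS hkF
      have h2 : g k = y := (Finset.mem_filter.mp hk).2
      have h3 := hgball k hkF
      rw [h2, Metric.mem_ball, dist_eq_norm] at h3
      exact ⟨h1, h3⟩
    -- lower bound for the norm of the sum
    obtain ⟨k0, hk0⟩ := hBne
    have hy34 : 3 * δ / 4 < ‖y‖ := by
      have h := hBprop k0 hk0
      have := norm_sub_norm_le (T (fourierCoefFn f k0)) (T (fourierCoefFn f k0) - y)
      simp only [sub_sub_cancel] at this
      linarith [h.1, h.2]
    have hsum_eq : ∑ k ∈ B, T (fourierCoefFn f k)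
        = m • y + ∑ k ∈ B, (T (fourierCoefFn f k) - y) := by
      rw [Finset.sum_sub_distrib, Finset.sum_const, hm]
      abel
    have herr : ‖∑ k ∈ B, (T (fourierCoefFn f k) - y)‖ ≤ (m : ℝ) * (δ/4) := by
      calc ‖∑ k ∈ B, (T (fourierCoefFn f k) - y)‖
          ≤ ∑ k ∈ B, ‖T (fourierCoefFn f k) - y‖ := norm_sum_le _ _
        _ ≤ ∑ _k ∈ B, (δ/4) :=
            Finset.sum_le_sum fun k hk => (hBprop k hk).2.le
        _ = (m : ℝ) * (δ/4) := by rw [Finset.sum_const, hm]; simp [nsmul_eq_mul]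
    have hlow : (m : ℝ) * (δ/2) ≤ ‖∑ k ∈ B, T (fourierCoefFn f k)‖ := by
      rw [hsum_eq]
      have h1 : ‖(m • y : Y)‖ = (m : ℝ) * ‖y‖ := by
        rw [← Nat.cast_smul_eq_nsmul ℝ, norm_smul, Real.norm_natCast]
      have h2 := norm_add_le_of_le (le_refl ‖(m • y : Y)‖) herr
      have h3 : ‖(m • y : Y)‖ - ‖∑ k ∈ B, (T (fourierCoefFn f k) - y)‖
          ≤ ‖m • y + ∑ k ∈ B, (T (fourierCoefFn f k) - y)‖ := by
        have := norm_sub_le (m • y + ∑ k ∈ B, (T (fourierCoefFn f k) - y))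
          (∑ k ∈ B, (T (fourierCoefFn f k) - y))
        simp only [add_sub_cancel_right] at this
        linarith
      have hmnn : (0:ℝ) ≤ (m:ℝ) := Nat.cast_nonneg m
      nlinarith [hy34, herr, h1, h3]
    -- upper bound
    have hup : ‖∑ k ∈ B, T (fourierCoefFn f k)‖ ≤ ‖T‖ * Real.sqrt m := by
      have h1 : ∑ k ∈ B, T (fourierCoefFn f k) = T (∑ k ∈ B, fourierCoefFn f k) :=
        (map_sum T _ _).symm
      rw [h1]
      calc ‖T (∑ k ∈ B, fourierCoefFn f k)‖ ≤ ‖T‖ * ‖∑ k ∈ B, fourierCoefFn f k‖ :=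
            T.le_opNorm _
        _ ≤ ‖T‖ * Real.sqrt m :=
            mul_le_mul_of_nonneg_left (sum_fourierCoef_norm_le f hf hb B) (norm_nonneg _)
    -- contradiction
    have hs0 : (0:ℝ) ≤ Real.sqrt m := Real.sqrt_nonneg _
    have hsq : Real.sqrt m * Real.sqrt m = (m : ℝ) :=
      Real.mul_self_sqrt (Nat.cast_nonneg m)
    have hkey : (m : ℝ) * (δ/2) ≤ ‖T‖ * Real.sqrt m := le_trans hlow hup
    have hx' : 4 * ‖T‖^2 < (m : ℝ) * δ^2 := by
      rw [hx, div_pow] at hmR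
      have h4 := (div_lt_iff₀ (by positivity : (0:ℝ) < δ^2)).mp hmR
      calc 4 * ‖T‖^2 = (2*‖T‖)^2 := by ring
        _ < (m : ℝ) * δ^2 := h4
    have hme : (0:ℝ) < m := by
      have : (1:ℝ) ≤ m := by exact_mod_cast hm1
      linarith
    have hkey0 : (0:ℝ) ≤ (m : ℝ) * (δ/2) :=
      mul_nonneg (Nat.cast_nonneg m) (by linarith)
    have hsqle : (m:ℝ)*(δ/2) * ((m:ℝ)*(δ/2)) ≤ (‖T‖*Real.sqrt m) * (‖T‖*Real.sqrt m) :=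
      mul_le_mul hkey hkey hkey0 (hkey0.trans hkey)
    nlinarith [hsqle, hsq, hx', hme, hδ]
  -- S is finite
  have hfin : S.Finite := by
    by_contra h
    rw [← Set.not_infinite, not_not] at h
    obtain ⟨F, hFS, hFcard⟩ := h.exists_subset_card_eq (C.card * m0 + 1)
    have := claim F hFS
    omega
  refine ⟨hfin.toFinset, ?_, ?_⟩
  · exact claim hfin.toFinset (by simp)
  · intro k hk
    rw [Set.Finite.mem_toFinset]
    exact hk
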